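/- arXiv:1809.09987 — 5 statements merged into one kernel-verified Lean document; each statement's English description precedes it below -/
import Mathlib

section
/- Let d ≥ 1, ε > 0, let u : ℝᵈ → ℝ be twice continuously differentiable and l : ℝᵈ → ℝᵈ be continuously differentiable, and set b(x) = −(1/2)∇u(x) + l(x). Assume ⟨∇u(x), l(x)⟩ = 0 and div l(x) = 0 for every x ∈ ℝᵈ. Then the Gibbs density μ(x) = exp(−u(x)/ε) satisfies the stationary Fokker–Planck equation (ε/2)Δμ(x) − div(μ b)(x) = 0 for every x ∈ ℝᵈ. -/
open RealInnerProductSpace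

/-- The divergence of a vector field on `ℝᵈ`: the sum of the partial derivatives of the
coordinate functions. -/
noncomputable def ediv {d : ℕ} (v : EuclideanSpace ℝ (Fin d) → EuclideanSpace ℝ (Fin d))
    (x : EuclideanSpace ℝ (Fin d)) : ℝ :=
  ∑ i, fderiv ℝ v x (EuclideanSpace.single i 1) i

section aux

variable {d : ℕ}

local notation "E" => EuclideanSpace ℝ (Fin d)

lemma ediv_congr {v w : E → E} (h : v = w) (x : E) : ediv v x = ediv w x := by rw [h]

lemma euclid_sum_single (y : E) : ∑ i, y i • EuclideanSpace.single i (1:ℝ) = y := by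
  ext j
  rw [WithLp.ofLp_sum, Fintype.sum_apply]
  simp [EuclideanSpace.single_apply]

lemma fderiv_apply_eq_sum (f : E → ℝ) (x y : E) :
    fderiv ℝ f x y = ∑ i, y i * fderiv ℝ f x (EuclideanSpace.single i 1) := by
  conv_lhs => rw [← euclid_sum_single y]
  rw [map_sum]
  simp [smul_eq_mul]

lemma ediv_add (v w : E → E) (x : E) (hv : DifferentiableAt ℝ v x)
    (hw : DifferentiableAt ℝ w x) :
    ediv (fun y => v y + w y) x = ediv v x + ediv w x := by
  unfold ediv
  rw [← Finset.sum_add_distrib]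
  refine Finset.sum_congr rfl fun i _ => ?_
  rw [fderiv_fun_add hv hw]
  simp

lemma ediv_const_smul (c : ℝ) (v : E → E) (x : E) (hv : DifferentiableAt ℝ v x) :
    ediv (fun y => c • v y) x = c * ediv v x := by
  unfold ediv
  rw [Finset.mul_sum]
  refine Finset.sum_congr rfl fun i _ => ?_
  rw [fderiv_fun_const_smul hv]
  simp

lemma ediv_scalar_smul (f : E → ℝ) (v : E → E) (x : E) (hf : DifferentiableAt ℝ f x)
    (hv : DifferentiableAt ℝ v x) :
    ediv (fun y => f y • v y) x = fderiv ℝ f x (v x) + f x * ediv v x := by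
  unfold ediv
  rw [fderiv_apply_eq_sum, Finset.mul_sum, ← Finset.sum_add_distrib]
  refine Finset.sum_congr rfl fun i _ => ?_
  rw [fderiv_fun_smul hf hv]
  simp [mul_comm]
  ring

end aux

/-- If `b = −(1/2)∇u + l` with `⟨∇u, l⟩ = 0` and `div l = 0` everywhere, then the Gibbs
density `μ = exp(−u/ε)` satisfies the stationary Fokker–Planck equation
`(ε/2)Δμ − div(μ b) = 0`, where `Δμ = div(∇μ)`. -/
theorem gibbs_stationary_fokker_planck (d : ℕ) (hd : 1 ≤ d) (ε : ℝ) (hε : 0 < ε)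
    (u : EuclideanSpace ℝ (Fin d) → ℝ) (hu : ContDiff ℝ 2 u)
    (l : EuclideanSpace ℝ (Fin d) → EuclideanSpace ℝ (Fin d)) (hl : ContDiff ℝ 1 l)
    (b : EuclideanSpace ℝ (Fin d) → EuclideanSpace ℝ (Fin d))
    (hb : ∀ x, b x = -(1/2 : ℝ) • gradient u x + l x)
    (horth : ∀ x, ⟪gradient u x, l x⟫ = 0)
    (hdivfree : ∀ x, ediv l x = 0)
    (μ : EuclideanSpace ℝ (Fin d) → ℝ)
    (hμ : ∀ x, μ x = Real.exp (-u x / ε)) :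
    ∀ x, (ε/2) * ediv (fun y => gradient μ y) x - ediv (fun y => μ y • b y) x = 0 := by
  intro x
  have hεne : ε ≠ 0 := ne_of_gt hε
  -- basic smoothness facts
  have hgradu_eq : ∀ y, gradient u y
      = (InnerProductSpace.toDual ℝ _).symm (fderiv ℝ u y) := fun y => rfl
  have hgu_cd : ContDiff ℝ 1 (fun y => gradient u y) := by
    have h1 : ContDiff ℝ 1 (fderiv ℝ u) := hu.fderiv_right (by norm_num)
    exact ((InnerProductSpace.toDual ℝ (EuclideanSpace ℝ (Fin d))).symm.toContinuousLinearEquiv.contDiff).comp h1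
  have hgu_diff : DifferentiableAt ℝ (fun y => gradient u y) x :=
    (hgu_cd.differentiable one_ne_zero).differentiableAt
  have hu_diff : ∀ y, DifferentiableAt ℝ u y :=
    fun y => (hu.differentiable two_ne_zero).differentiableAt
  have hμeq : μ = fun y => Real.exp (-u y / ε) := funext hμ
  have hμ_cd : ContDiff ℝ 2 μ := by
    rw [hμeq]
    exact Real.contDiff_exp.comp ((hu.neg).div_const ε)
  have hμ_diff : ∀ y, DifferentiableAt ℝ μ y :=
    fun y => (hμ_cd.differentiable two_ne_zero).differentiableAt
  -- the inner function g = -u/ε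
  have hg_diff : ∀ y, DifferentiableAt ℝ (fun z => -u z / ε) y :=
    fun y => by fun_prop
  -- fderiv of μ
  have hfderivμ : ∀ y, fderiv ℝ μ y = (-(1/ε) * μ y) • fderiv ℝ u y := by
    intro y
    have hfd : fderiv ℝ (fun z => -u z / ε) y = (-(1/ε)) • fderiv ℝ u y := by
      have heq2 : (fun z => -u z / ε) = fun z => ε⁻¹ • (-u z) := by
        funext z
        simp [div_eq_inv_mul, mul_comm]
      rw [heq2, fderiv_fun_const_smul (by fun_prop), fderiv_fun_neg]
      ext z
      simp
    conv_lhs => rw [hμeq]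
    rw [fderiv_exp (hg_diff y), hfd, smul_smul, ← hμ y]
    congr 1
    ring
  -- gradient of μ
  have hgradμ : ∀ y, gradient μ y = (-(1/ε) * μ y) • gradient u y := by
    intro y
    show (InnerProductSpace.toDual ℝ _).symm (fderiv ℝ μ y) = _
    rw [hfderivμ y, hgradu_eq y]
    exact map_smul _ _ _
  -- key vector fields
  set F : EuclideanSpace ℝ (Fin d) → EuclideanSpace ℝ (Fin d) := fun y => μ y • gradient u y with hF
  set G : EuclideanSpace ℝ (Fin d) → EuclideanSpace ℝ (Fin d) := fun y => μ y • l y with hG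
  have hF_diff : DifferentiableAt ℝ F x := (hμ_diff x).smul hgu_diff
  have hl_diff : DifferentiableAt ℝ l x := (hl.differentiable one_ne_zero).differentiableAt
  have hG_diff : DifferentiableAt ℝ G x := (hμ_diff x).smul hl_diff
  -- first term
  have h1 : ediv (fun y => gradient μ y) x = -(1/ε) * ediv F x := by
    rw [ediv_congr (funext fun y => by rw [hgradμ y, mul_smul]), ediv_const_smul _ _ _ hF_diff]
  -- second term
  have h2 : ediv (fun y => μ y • b y) x = -(1/2) * ediv F x + ediv G x := by
    have heq : (fun y => μ y • b y) = fun y => (-(1/2:ℝ)) • F y + G y := by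
      funext y
      rw [hb y, smul_add, hF, hG]
      simp only []
      rw [smul_comm]
    rw [ediv_congr heq, ediv_add _ _ _ (hF_diff.fun_const_smul (-(1/2:ℝ))) hG_diff,
      ediv_const_smul _ _ _ hF_diff]
  -- divergence of G vanishes
  have h3 : ediv G x = 0 := by
    rw [hG]
    rw [ediv_scalar_smul _ _ _ (hμ_diff x) hl_diff, hdivfree x, mul_zero, add_zero]
    have h4 : fderiv ℝ u x (l x) = 0 := by
      have h5 : ⟪gradient u x, l x⟫ = fderiv ℝ u x (l x) := by
        rw [hgradu_eq]
        exact InnerProductSpace.toDual_symm_apply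
      rw [← h5, horth x]
    rw [hfderivμ x]
    simp [h4]
  rw [h1, h2, h3]
  field_simp
  ring
end

section
/- Let J be a real d × d matrix all of whose complex eigenvalues have negative real part. Then there exists a unique real symmetric positive definite d × d matrix Q satisfying Q(J + Q) + (J + Q)ᵀ Q = 0, i.e., such that the matrix Q(J + Q) is antisymmetric. -/
open Matrix Polynomial
open NormedSpace Filter
open scoped Topology ENNReal NNReal

attribute [local instance] Matrix.linftyOpNormedAddCommGroup Matrix.linftyOpNormedRing
  Matrix.linftyOpNormedAlgebra


variable {d : ℕ}

/-- eval of charpoly as a determinant -/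
lemma eval_charpoly_eq (A : Matrix (Fin d) (Fin d) ℂ) (μ : ℂ) :
    (Matrix.charpoly A).eval μ = (algebraMap ℂ (Matrix (Fin d) (Fin d) ℂ) μ - A).det := by
  rw [Matrix.charpoly, ← Polynomial.coe_evalRingHom, RingHom.map_det]
  congr 1
  ext i j
  by_cases h : i = j <;>
    simp [h, Matrix.charmatrix_apply, Matrix.algebraMap_eq_diagonal,
      Matrix.diagonal_apply, Matrix.map_apply]

lemma mem_spectrum_iff_det (A : Matrix (Fin d) (Fin d) ℂ) (μ : ℂ) :
    μ ∈ spectrum ℂ A ↔ (algebraMap ℂ (Matrix (Fin d) (Fin d) ℂ) μ - A).det = 0 := by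
  rw [spectrum.mem_iff, Matrix.isUnit_iff_isUnit_det, isUnit_iff_ne_zero, not_not]

lemma mem_spectrum_iff_root (A : Matrix (Fin d) (Fin d) ℂ) (μ : ℂ) :
    μ ∈ spectrum ℂ A ↔ (Matrix.charpoly A).IsRoot μ := by
  rw [mem_spectrum_iff_det, Polynomial.IsRoot, eval_charpoly_eq]

lemma spectrum_transpose (A : Matrix (Fin d) (Fin d) ℂ) :
    spectrum ℂ Aᵀ = spectrum ℂ A := by
  ext μ
  rw [mem_spectrum_iff_det, mem_spectrum_iff_det]
  have : algebraMap ℂ (Matrix (Fin d) (Fin d) ℂ) μ - Aᵀ =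
      (algebraMap ℂ (Matrix (Fin d) (Fin d) ℂ) μ - A)ᵀ := by
    rw [Matrix.transpose_sub, Matrix.algebraMap_eq_diagonal, Matrix.diagonal_transpose]
  rw [this, Matrix.det_transpose]

lemma spectrum_neg (A : Matrix (Fin d) (Fin d) ℂ) (μ : ℂ) :
    μ ∈ spectrum ℂ (-A) ↔ -μ ∈ spectrum ℂ A := by
  rw [spectrum.mem_iff, spectrum.mem_iff]
  have : algebraMap ℂ (Matrix (Fin d) (Fin d) ℂ) (-μ) - A =
      -(algebraMap ℂ (Matrix (Fin d) (Fin d) ℂ) μ - (-A)) := by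
    rw [map_neg]; abel
  rw [this, IsUnit.neg_iff]

lemma aeval_intertwine (Jc M Xc : Matrix (Fin d) (Fin d) ℂ)
    (h : Jc * Xc = Xc * M) (p : ℂ[X]) :
    (Polynomial.aeval Jc p) * Xc = Xc * (Polynomial.aeval M p) := by
  induction p using Polynomial.induction_on' with
  | add p q hp hq => rw [map_add, map_add, add_mul, mul_add, hp, hq]
  | monomial n a =>
      rw [Polynomial.aeval_monomial, Polynomial.aeval_monomial]
      have hpow : ∀ k : ℕ, Jc ^ k * Xc = Xc * M ^ k := by
        intro k
        induction k with
        | zero => simp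
        | succ k ih =>
            rw [pow_succ, pow_succ]
            calc Jc ^ k * Jc * Xc = Jc ^ k * (Jc * Xc) := by rw [mul_assoc]
              _ = Jc ^ k * (Xc * M) := by rw [h]
              _ = (Jc ^ k * Xc) * M := by rw [mul_assoc]
              _ = Xc * M ^ k * M := by rw [ih]
              _ = Xc * (M ^ k * M) := by rw [mul_assoc]
      calc (algebraMap ℂ _) a * Jc ^ n * Xc = (algebraMap ℂ _) a * (Jc ^ n * Xc) := by
            rw [mul_assoc]
        _ = (algebraMap ℂ _) a * (Xc * M ^ n) := by rw [hpow]
        _ = Xc * ((algebraMap ℂ _) a * M ^ n) := by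
            rw [← mul_assoc, Algebra.commutes, mul_assoc]

/-- Injectivity of the Sylvester map `X ↦ J X + X Jᵀ` for stable `J`. -/
lemma sylvester_inj (hd : 0 < d) (J : Matrix (Fin d) (Fin d) ℝ)
    (hJ : ∀ μ ∈ spectrum ℂ (J.map (Complex.ofReal)), μ.re < 0)
    (X : Matrix (Fin d) (Fin d) ℝ) (hX : J * X + X * Jᵀ = 0) : X = 0 := by
  set f : ℝ →+* ℂ := algebraMap ℝ ℂ with hf
  have hfc : (J.map (Complex.ofReal)) = f.mapMatrix J := rfl
  set Jc : Matrix (Fin d) (Fin d) ℂ := f.mapMatrix J with hJc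
  set Xc : Matrix (Fin d) (Fin d) ℂ := f.mapMatrix X with hXc
  have h : Jc * Xc = Xc * (-Jcᵀ) := by
    have := congrArg (f.mapMatrix) hX
    rw [_root_.map_add, _root_.map_mul, _root_.map_mul, _root_.map_zero] at this
    have ht : f.mapMatrix Jᵀ = Jcᵀ := by
      ext i j; simp [hJc, RingHom.mapMatrix_apply, Matrix.map_apply]
    rw [ht] at this
    rw [mul_neg, eq_comm, neg_eq_iff_add_eq_zero, add_comm]
    exact this
  have key := aeval_intertwine Jc (-Jcᵀ) Xc h (Matrix.charpoly Jc)
  rw [Matrix.aeval_self_charpoly, zero_mul] at key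
  -- show `aeval (-Jcᵀ) (charpoly Jc)` is a unit
  have hdeg : 0 < (Matrix.charpoly Jc).degree := by
    rw [Matrix.charpoly_degree_eq_dim, Fintype.card_fin]
    exact_mod_cast hd
  have hspec : spectrum ℂ (Polynomial.aeval (-Jcᵀ) (Matrix.charpoly Jc)) =
      (fun x => (Matrix.charpoly Jc).eval x) '' spectrum ℂ (-Jcᵀ) :=
    spectrum.map_polynomial_aeval_of_degree_pos _ _ hdeg
  have hunit : IsUnit (Polynomial.aeval (-Jcᵀ) (Matrix.charpoly Jc)) := by
    by_contra hcon
    have h0 : (0 : ℂ) ∈ spectrum ℂ (Polynomial.aeval (-Jcᵀ) (Matrix.charpoly Jc)) :=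
      (spectrum.zero_mem_iff (R := ℂ)).mpr hcon
    rw [hspec] at h0
    obtain ⟨μ, hμmem, hμ0⟩ := h0
    have h1 : μ ∈ spectrum ℂ Jc := (mem_spectrum_iff_root Jc μ).mpr hμ0
    have h2 : -μ ∈ spectrum ℂ Jc := by
      rw [spectrum_neg, spectrum_transpose] at hμmem; exact hμmem
    have := hJ μ (by rw [hfc]; exact h1)
    have h3 := hJ (-μ) (by rw [hfc]; exact h2)
    simp only [Complex.neg_re] at h3
    linarith
  obtain ⟨u, hu⟩ := hunit
  have : Xc = 0 := by
    calc Xc = Xc * (↑u * ↑u⁻¹) := by rw [Units.mul_inv, mul_one]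
      _ = Xc * ↑u * ↑u⁻¹ := by rw [mul_assoc]
      _ = 0 * ↑u⁻¹ := by rw [hu, ← key]
      _ = 0 := zero_mul _
  ext i j
  have := congrFun (congrFun this i) j
  simpa [hXc, RingHom.mapMatrix_apply, Matrix.map_apply, hf] using this

/-- The Sylvester/Lyapunov linear map. -/
noncomputable def sylMap (J : Matrix (Fin d) (Fin d) ℝ) :
    Matrix (Fin d) (Fin d) ℝ →ₗ[ℝ] Matrix (Fin d) (Fin d) ℝ where
  toFun X := J * X + X * Jᵀ
  map_add' X Y := by noncomm_ring
  map_smul' c X := by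
    simp only [RingHom.id_apply, Matrix.mul_smul, Matrix.smul_mul, smul_add]

lemma exists_lyapunov_sol (hd : 0 < d) (J : Matrix (Fin d) (Fin d) ℝ)
    (hJ : ∀ μ ∈ spectrum ℂ (J.map (Complex.ofReal)), μ.re < 0) :
    ∃ P : Matrix (Fin d) (Fin d) ℝ,
      J * P + P * Jᵀ = -(2 : ℝ) • (1 : Matrix (Fin d) (Fin d) ℝ) ∧ Pᵀ = P := by
  have hinj : Function.Injective (sylMap J) := by
    rw [injective_iff_map_eq_zero]
    intro X hX
    exact sylvester_inj hd J hJ X hX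
  have hsurj : Function.Surjective (sylMap J) :=
    (LinearMap.injective_iff_surjective).mp hinj
  obtain ⟨P, hP⟩ := hsurj (-(2 : ℝ) • (1 : Matrix (Fin d) (Fin d) ℝ))
  refine ⟨P, hP, ?_⟩
  apply hinj
  show J * Pᵀ + Pᵀ * Jᵀ = J * P + P * Jᵀ
  have h1 : J * Pᵀ + Pᵀ * Jᵀ = (J * P + P * Jᵀ)ᵀ := by
    rw [Matrix.transpose_add, Matrix.transpose_mul, Matrix.transpose_mul,
      Matrix.transpose_transpose]
    abel
  rw [h1, show J * P + P * Jᵀ = -(2:ℝ) • 1 from hP, Matrix.transpose_smul,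
    Matrix.transpose_one]



lemma spectrum_exp_subset (N : Matrix (Fin d) (Fin d) ℂ) (μ : ℂ)
    (hμ : μ ∈ spectrum ℂ (exp N)) :
    ∃ lam ∈ spectrum ℂ N, μ = Complex.exp lam := by
  set B : Matrix (Fin d) (Fin d) ℂ := exp N with hB
  have hdet : (algebraMap ℂ (Matrix (Fin d) (Fin d) ℂ) μ - B).det = 0 :=
    (mem_spectrum_iff_det B μ).mp hμ
  obtain ⟨v₀, hv₀ne, hv₀⟩ := (Matrix.exists_mulVec_eq_zero_iff).mpr hdet
  have hBv₀ : B *ᵥ v₀ = μ • v₀ := by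
    rw [Matrix.sub_mulVec, Algebra.algebraMap_eq_smul_one, Matrix.smul_mulVec,
      Matrix.one_mulVec, sub_eq_zero] at hv₀
    exact hv₀.symm
  set b : Module.End ℂ (Fin d → ℂ) := Matrix.mulVecLin B with hbdef
  set W : Submodule ℂ (Fin d → ℂ) := Module.End.eigenspace b μ with hWdef
  have hv₀W : v₀ ∈ W := by
    rw [hWdef, Module.End.mem_eigenspace_iff]
    exact hBv₀
  have hWne : W ≠ ⊥ := Submodule.ne_bot_iff W |>.mpr ⟨v₀, hv₀W, hv₀ne⟩
  haveI : Nontrivial W := Submodule.nontrivial_iff_ne_bot.mpr hWne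
  have hNB : N * B = B * N := ((Commute.refl N).exp_right)
  set a : Module.End ℂ (Fin d → ℂ) := Matrix.mulVecLin N with hadef
  have hinv : ∀ x ∈ W, a x ∈ W := by
    intro x hx
    rw [hWdef, Module.End.mem_eigenspace_iff] at hx ⊢
    simp only [hbdef, hadef, Matrix.mulVecLin_apply] at hx ⊢
    rw [Matrix.mulVec_mulVec, ← hNB, ← Matrix.mulVec_mulVec, hx, Matrix.mulVec_smul]
  set a' : Module.End ℂ W := LinearMap.restrict a hinv with ha'def
  obtain ⟨lam, hlam⟩ := Module.End.exists_eigenvalue a'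
  obtain ⟨w', hw'⟩ := hlam.exists_hasEigenvector
  set w : Fin d → ℂ := (w' : Fin d → ℂ) with hwdef
  have hwne : w ≠ 0 := by
    simpa [hwdef, Submodule.coe_eq_zero] using hw'.right
  have haw : N *ᵥ w = lam • w := by
    have := hw'.apply_eq_smul
    have h2 := congrArg (Subtype.val) this
    simpa [ha'def, LinearMap.restrict_apply, hadef] using h2
  have hlamspec : lam ∈ spectrum ℂ N := by
    rw [mem_spectrum_iff_det]
    apply (Matrix.exists_mulVec_eq_zero_iff).mp
    refine ⟨w, hwne, ?_⟩
    rw [Matrix.sub_mulVec, Algebra.algebraMap_eq_smul_one, Matrix.smul_mulVec,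
      Matrix.one_mulVec, haw, sub_self]
  have hBw : B *ᵥ w = μ • w := by
    have h := Module.End.mem_eigenspace_iff.mp w'.2
    simpa only [hbdef, Matrix.mulVecLin_apply] using h
  -- now compute B *ᵥ w via the series
  have hNpow : ∀ n : ℕ, N ^ n *ᵥ w = lam ^ n • w := by
    intro n
    induction n with
    | zero => simp
    | succ n ih =>
        rw [pow_succ', ← Matrix.mulVec_mulVec, ih, Matrix.mulVec_smul, haw,
          smul_smul, ← pow_succ]
  have hBw2 : B *ᵥ w = Complex.exp lam • w := by
    set Llin : Matrix (Fin d) (Fin d) ℂ →ₗ[ℝ] (Fin d → ℂ) :=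
      { toFun := fun M => M *ᵥ w
        map_add' := fun M₁ M₂ => Matrix.add_mulVec M₁ M₂ w
        map_smul' := fun c M => by
          simp [Matrix.smul_mulVec] } with hLlin
    set L := LinearMap.toContinuousLinearMap Llin with hL
    have hsum : Summable (fun n : ℕ => ((n.factorial : ℝ))⁻¹ • N ^ n) :=
      expSeries_summable' (𝕂 := ℝ) N
    have h1 : B *ᵥ w = ∑' n : ℕ, ((n.factorial : ℝ))⁻¹ • (N ^ n *ᵥ w) := by
      have h2 : B = ∑' n : ℕ, ((n.factorial : ℝ))⁻¹ • N ^ n := by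
        rw [hB, exp_eq_tsum (𝕂 := ℝ)]
      have h3 := L.map_tsum hsum
      have h4 : L B = ∑' n : ℕ, L (((n.factorial : ℝ))⁻¹ • N ^ n) := by
        rw [h2]; exact h3
      simpa [hL, Llin] using h4
    rw [h1]
    have h5 : ∀ n : ℕ, ((n.factorial : ℝ))⁻¹ • (N ^ n *ᵥ w)
        = (((n.factorial : ℂ))⁻¹ * lam ^ n) • w := by
      intro n
      rw [hNpow n, ← smul_assoc]
      congr 1
      rw [Algebra.smul_def]
      push_cast
      ring
    simp_rw [h5]
    have hsum2 : Summable (fun n : ℕ => ((n.factorial : ℂ))⁻¹ * lam ^ n) := by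
      simpa [smul_eq_mul] using expSeries_summable' (𝕂 := ℂ) lam
    rw [hsum2.tsum_smul_const]
    congr 1
    rw [Complex.exp_eq_exp_ℂ, exp_eq_tsum (𝕂 := ℂ)]
    simp [smul_eq_mul]
  refine ⟨lam, hlamspec, ?_⟩
  have : (μ - Complex.exp lam) • w = 0 := by
    rw [sub_smul, ← hBw, ← hBw2, sub_self]
  rcases smul_eq_zero.mp this with h | h
  · exact sub_eq_zero.mp h
  · exact absurd h hwne

lemma pow_exp_norm_tendsto (hd : 0 < d) (N : Matrix (Fin d) (Fin d) ℂ)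
    (hN : ∀ lam ∈ spectrum ℂ N, lam.re < 0) :
    Tendsto (fun n : ℕ => ‖(exp N) ^ n‖) atTop (𝓝 0) := by
  haveI : Nonempty (Fin d) := ⟨⟨0, hd⟩⟩
  have hr : spectralRadius ℂ (exp N) < 1 := by
    have := spectrum.spectralRadius_lt_of_forall_lt (exp N)
      (r := 1) (fun z hz => ?_)
    · simpa using this
    · obtain ⟨lam, hlam, rfl⟩ := spectrum_exp_subset N z hz
      have : ‖Complex.exp lam‖ < 1 := by
        rw [Complex.norm_exp]
        exact Real.exp_lt_one_iff.mpr (hN lam hlam)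
      rw [← NNReal.coe_lt_coe]
      simpa [nnnorm] using this
  obtain ⟨c, hc1, hc2⟩ := exists_between hr
  have hgel := spectrum.pow_nnnorm_pow_one_div_tendsto_nhds_spectralRadius (exp N)
  have hev := hgel.eventually_lt_const hc1
  have hcne : c ≠ ⊤ := (hc2.trans_le le_top).ne
  set cr : ℝ := c.toReal with hcr
  have hcr1 : cr < 1 := by
    rw [hcr]
    have h := (ENNReal.toReal_lt_toReal hcne ENNReal.one_ne_top).mpr hc2
    simpa using h
  have hcr0 : 0 ≤ cr := ENNReal.toReal_nonneg
  have hbound : ∀ᶠ n : ℕ in atTop, ‖(exp N) ^ n‖ ≤ cr ^ n := by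
    filter_upwards [hev, eventually_ge_atTop 1] with n hn hn1
    have hne : (n : ℝ) ≠ 0 := by positivity
    have h1 : (‖(exp N) ^ n‖₊ : ℝ≥0∞) ≤ c ^ (n : ℝ) := by
      have := ENNReal.rpow_le_rpow hn.le (by positivity : (0:ℝ) ≤ (n:ℝ))
      rwa [← ENNReal.rpow_mul, one_div, inv_mul_cancel₀ hne, ENNReal.rpow_one] at this
    have h2 : (‖(exp N) ^ n‖₊ : ℝ≥0∞).toReal ≤ (c ^ (n:ℝ)).toReal := by
      apply ENNReal.toReal_mono _ h1
      exact (ENNReal.rpow_ne_top_of_nonneg (by positivity) hcne)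
    rwa [← ENNReal.toReal_rpow, Real.rpow_natCast] at h2
  have hcpow : Tendsto (fun n : ℕ => cr ^ n) atTop (𝓝 0) :=
    tendsto_pow_atTop_nhds_zero_of_lt_one hcr0 hcr1
  exact squeeze_zero' (Eventually.of_forall fun n => norm_nonneg _) hbound hcpow

lemma exp_smul_norm_tendsto (hd : 0 < d) (N : Matrix (Fin d) (Fin d) ℂ)
    (hN : ∀ lam ∈ spectrum ℂ N, lam.re < 0) :
    Tendsto (fun t : ℝ => ‖exp (t • N)‖) atTop (𝓝 0) := by
  have hcont : Continuous (fun s : ℝ => exp (s • N)) := by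
    rw [continuous_iff_continuousAt]
    exact fun s => (hasDerivAt_exp_smul_const N s).continuousAt
  obtain ⟨C, hC⟩ := (isCompact_Icc (a := (0:ℝ)) (b := 1)).exists_bound_of_continuousOn
    hcont.continuousOn
  have hC0 : 0 ≤ C := le_trans (norm_nonneg _) (hC 0 ⟨le_refl 0, zero_le_one⟩)
  have hbound : ∀ t : ℝ, 0 ≤ t → ‖exp (t • N)‖ ≤ C * ‖(exp N) ^ (⌊t⌋₊)‖ := by
    intro t ht
    have hsplit : t • N = (t - (⌊t⌋₊ : ℝ)) • N + ((⌊t⌋₊ : ℝ)) • N := by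
      rw [← add_smul, sub_add_cancel]
    have hcomm : Commute ((t - (⌊t⌋₊ : ℝ)) • N) (((⌊t⌋₊ : ℝ)) • N) :=
      ((Commute.refl N).smul_left _).smul_right _
    rw [hsplit, show exp ((t - (⌊t⌋₊ : ℝ)) • N + ((⌊t⌋₊ : ℝ)) • N) = exp ((t - (⌊t⌋₊ : ℝ)) • N) * exp (((⌊t⌋₊ : ℝ)) • N) from exp_add_of_commute hcomm]
    have h2 : exp (((⌊t⌋₊ : ℝ)) • N) = (exp N) ^ (⌊t⌋₊) := by
      rw [Nat.cast_smul_eq_nsmul ℝ, Matrix.exp_nsmul]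
    rw [h2]
    calc ‖exp ((t - (⌊t⌋₊ : ℝ)) • N) * (exp N) ^ (⌊t⌋₊)‖
        ≤ ‖exp ((t - (⌊t⌋₊ : ℝ)) • N)‖ * ‖(exp N) ^ (⌊t⌋₊)‖ := norm_mul_le _ _
      _ ≤ C * ‖(exp N) ^ (⌊t⌋₊)‖ := by
          apply mul_le_mul_of_nonneg_right _ (norm_nonneg _)
          exact hC _ ⟨sub_nonneg.mpr (Nat.floor_le ht), by
            have := Nat.lt_floor_add_one t
            linarith⟩
  have hu : Tendsto (fun t : ℝ => C * ‖(exp N) ^ (⌊t⌋₊)‖) atTop (𝓝 0) := by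
    have h1 := (pow_exp_norm_tendsto hd N hN).comp (tendsto_nat_floor_atTop (α := ℝ))
    have h2 := h1.const_mul C
    simpa using h2
  apply squeeze_zero' (g := fun t => C * ‖(exp N) ^ (⌊t⌋₊)‖)
    (Eventually.of_forall fun t => norm_nonneg _) _ hu
  filter_upwards [eventually_ge_atTop (0:ℝ)] with t ht
  exact hbound t ht

lemma real_coord_decay (hd : 0 < d) (A : Matrix (Fin d) (Fin d) ℝ)
    (hA : ∀ lam ∈ spectrum ℂ (A.map Complex.ofReal), lam.re < 0) (v : Fin d → ℝ) (i : Fin d) :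
    Tendsto (fun t : ℝ => (exp (t • A) *ᵥ v) i) atTop (𝓝 0) := by
  set Ac : Matrix (Fin d) (Fin d) ℂ := A.map Complex.ofReal with hAc
  set vc : Fin d → ℂ := fun j => (v j : ℂ) with hvc
  set LM : Matrix (Fin d) (Fin d) ℝ →ₗ[ℝ] Matrix (Fin d) (Fin d) ℂ :=
    { toFun := fun M => M.map Complex.ofReal
      map_add' := fun M₁ M₂ => by
        ext i j; simp [Matrix.map_apply]
      map_smul' := fun c M => by
        ext i j; simp [Matrix.map_apply, Complex.real_smul, Complex.ofReal_mul] } with hLM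
  have hmapcont : Continuous fun M : Matrix (Fin d) (Fin d) ℝ =>
      ((algebraMap ℝ ℂ).mapMatrix M : Matrix (Fin d) (Fin d) ℂ) :=
    LM.continuous_of_finiteDimensional
  have hexp_map : ∀ t : ℝ, (exp (t • A)).map Complex.ofReal = exp (t • Ac) := by
    intro t
    have h1 := map_exp ((algebraMap ℝ ℂ).mapMatrix
      (m := Fin d)) hmapcont (t • A)
    have h2 : (algebraMap ℝ ℂ).mapMatrix (t • A) = t • Ac := by
      ext i j
      simp [RingHom.mapMatrix_apply, Matrix.map_apply, hAc, Complex.real_smul,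
        Complex.ofReal_mul]
    rw [h2] at h1
    exact h1
  have hco : ∀ t : ℝ, ((exp (t • A) *ᵥ v) i : ℂ) = ((exp (t • Ac)) *ᵥ vc) i := by
    intro t
    rw [← hexp_map]
    simp only [Matrix.mulVec, dotProduct, Matrix.map_apply, hvc]
    push_cast
    rfl
  have hbound : ∀ t : ℝ, ‖(exp (t • A) *ᵥ v) i‖ ≤ ‖exp (t • Ac)‖ * ‖vc‖ := by
    intro t
    have h1 : ‖(exp (t • A) *ᵥ v) i‖ = ‖((exp (t • Ac)) *ᵥ vc) i‖ := by
      rw [← hco]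
      simp [Complex.norm_real]
    rw [h1]
    exact le_trans (norm_le_pi_norm _ i) (Matrix.linfty_opNorm_mulVec _ _)
  have hg : Tendsto (fun t : ℝ => ‖exp (t • Ac)‖ * ‖vc‖) atTop (𝓝 0) := by
    have := (exp_smul_norm_tendsto hd Ac hA).mul_const ‖vc‖
    simpa using this
  exact squeeze_zero_norm hbound hg

lemma lyapunov_posdef (hd : 0 < d) (J : Matrix (Fin d) (Fin d) ℝ)
    (hJ : ∀ μ ∈ spectrum ℂ (J.map (Complex.ofReal)), μ.re < 0)
    (P : Matrix (Fin d) (Fin d) ℝ)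
    (hP : J * P + P * Jᵀ = -(2 : ℝ) • (1 : Matrix (Fin d) (Fin d) ℝ))
    (hPs : Pᵀ = P) : P.PosDef := by
  refine Matrix.PosDef.of_dotProduct_mulVec_pos ?_ ?_
  · have h1 : Pᴴ = Pᵀ := by
      ext i j; simp [Matrix.conjTranspose_apply]
    rw [Matrix.IsHermitian, h1, hPs]
  intro v hv
  set A : Matrix (Fin d) (Fin d) ℝ := Jᵀ with hA
  have hAspec : ∀ lam ∈ spectrum ℂ (A.map Complex.ofReal), lam.re < 0 := by
    intro lam hlam
    apply hJ
    have h2 : A.map Complex.ofReal = (J.map Complex.ofReal)ᵀ := by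
      ext i j; simp [hA, Matrix.map_apply]
    rw [h2, spectrum_transpose] at hlam
    exact hlam
  set g : ℝ → (Fin d → ℝ) := fun t => exp (t • A) *ᵥ v with hg
  set E : ℝ → Matrix (Fin d) (Fin d) ℝ := fun t => exp (t • A) with hE
  have hEd : ∀ t, HasDerivAt E (E t * A) t := fun t => hasDerivAt_exp_smul_const A t
  have hEcomm : ∀ t, E t * A = A * E t := by
    intro t
    exact (((Commute.refl A).smul_right t).exp_right).eq.symm
  -- coordinatewise derivative of g
  have hgd : ∀ t i, HasDerivAt (fun s => g s i) ((A *ᵥ g t) i) t := by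
    intro t i
    have hentry : ∀ j, HasDerivAt (fun s => E s i j) ((E t * A) i j) t := by
      intro j
      set Lij : Matrix (Fin d) (Fin d) ℝ →ₗ[ℝ] ℝ :=
        { toFun := fun M => M i j
          map_add' := fun M₁ M₂ => rfl
          map_smul' := fun c M => rfl } with hLij
      exact (Lij.toContinuousLinearMap.hasFDerivAt (x := E t)).comp_hasDerivAt t (hEd t)
    have hsum : HasDerivAt (fun s => ∑ j, E s i j * v j)
        (∑ j, (E t * A) i j * v j) t := by
      apply HasDerivAt.fun_sum
      intro j _
      exact (hentry j).mul_const (v j)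
    have heq1 : (fun s => g s i) = fun s => ∑ j, E s i j * v j := by
      funext s
      simp [hg, hE, Matrix.mulVec, dotProduct]
    have heq2 : (∑ j, (E t * A) i j * v j) = (A *ᵥ g t) i := by
      have h3 : ((E t * A) *ᵥ v) i = (A *ᵥ g t) i := by
        rw [hEcomm t, ← Matrix.mulVec_mulVec]
      rw [← h3]
      simp [Matrix.mulVec, dotProduct]
    rw [heq1, ← heq2]
    exact hsum
  -- dot product swap lemma
  have swap : ∀ (M : Matrix (Fin d) (Fin d) ℝ) (x y : Fin d → ℝ),
      (M *ᵥ x) ⬝ᵥ y = x ⬝ᵥ (Mᵀ *ᵥ y) := by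
    intro M x y
    simp only [dotProduct, Matrix.mulVec, dotProduct, Matrix.transpose_apply,
      Finset.sum_mul, Finset.mul_sum]
    rw [Finset.sum_comm]
    exact Finset.sum_congr rfl fun i _ => Finset.sum_congr rfl fun j _ => by ring
  set φ : ℝ → ℝ := fun t => g t ⬝ᵥ (P *ᵥ g t) with hφ
  have hφd : ∀ t, HasDerivAt φ (-2 * (g t ⬝ᵥ g t)) t := by
    intro t
    have hPgd : ∀ i, HasDerivAt (fun s => (P *ᵥ g s) i) ((P *ᵥ (A *ᵥ g t)) i) t := by
      intro i
      have h4 : HasDerivAt (fun s => ∑ j, P i j * g s j) (∑ j, P i j * (A *ᵥ g t) j) t := by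
        apply HasDerivAt.fun_sum
        intro j _
        exact (hgd t j).const_mul (P i j)
      have heq3 : (fun s => (P *ᵥ g s) i) = fun s => ∑ j, P i j * g s j := by
        funext s; simp [Matrix.mulVec, dotProduct]
      have heq4 : (∑ j, P i j * (A *ᵥ g t) j) = (P *ᵥ (A *ᵥ g t)) i := by
        simp [Matrix.mulVec, dotProduct]
      rw [heq3, ← heq4]
      exact h4
    have h5 : HasDerivAt (fun s => ∑ i, g s i * (P *ᵥ g s) i)
        (∑ i, ((A *ᵥ g t) i * (P *ᵥ g t) i + g t i * (P *ᵥ (A *ᵥ g t)) i)) t := by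
      apply HasDerivAt.fun_sum
      intro i _
      exact (hgd t i).mul (hPgd i)
    have heq5 : φ = fun s => ∑ i, g s i * (P *ᵥ g s) i := rfl
    have quad : ∀ x : Fin d → ℝ,
        (A *ᵥ x) ⬝ᵥ (P *ᵥ x) + x ⬝ᵥ (P *ᵥ (A *ᵥ x)) = -2 * (x ⬝ᵥ x) := by
      intro x
      rw [swap A x (P *ᵥ x), Matrix.mulVec_mulVec, Matrix.mulVec_mulVec,
        ← dotProduct_add, ← Matrix.add_mulVec]
      have h6 : Aᵀ * P + P * A = -(2:ℝ) • (1 : Matrix (Fin d) (Fin d) ℝ) := by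
        rw [hA, Matrix.transpose_transpose]
        exact hP
      rw [h6, Matrix.smul_mulVec, Matrix.one_mulVec, dotProduct_smul,
        smul_eq_mul]
    have heq6 : (∑ i, ((A *ᵥ g t) i * (P *ᵥ g t) i + g t i * (P *ᵥ (A *ᵥ g t)) i))
        = -2 * (g t ⬝ᵥ g t) := by
      rw [Finset.sum_add_distrib]
      exact quad (g t)
    rw [heq5, ← heq6]
    exact h5
  -- φ tends to 0
  have hdecay : ∀ i, Tendsto (fun t => g t i) atTop (𝓝 0) :=
    fun i => real_coord_decay hd A hAspec v i
  have htend : Tendsto φ atTop (𝓝 0) := by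
    have h7 : Tendsto (fun t => ∑ i, g t i * ∑ j, P i j * g t j) atTop
        (𝓝 (∑ i : Fin d, 0 * ∑ j : Fin d, P i j * 0)) := by
      apply tendsto_finset_sum
      intro i _
      exact (hdecay i).mul (tendsto_finset_sum _ fun j _ =>
        (tendsto_const_nhds.mul (hdecay j)))
    have h8 : (fun t => ∑ i, g t i * ∑ j, P i j * g t j) = φ := by
      funext t
      simp [hφ, dotProduct, Matrix.mulVec]
    rw [h8] at h7
    simpa using h7
  -- g never vanishes
  have hgne : ∀ t, g t ≠ 0 := by
    intro t hgt0
    apply hv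
    obtain ⟨u, hu⟩ := NormedSpace.isUnit_exp (t • A)
    have h9 : (↑u⁻¹ : Matrix (Fin d) (Fin d) ℝ) *ᵥ (exp (t • A) *ᵥ v) = v := by
      rw [Matrix.mulVec_mulVec, show exp (t • A) = (u : Matrix (Fin d) (Fin d) ℝ) from hu.symm, Units.inv_mul, Matrix.one_mulVec]
    rw [show exp (t • A) *ᵥ v = g t from rfl, hgt0, Matrix.mulVec_zero] at h9
    exact h9.symm
  -- strictly decreasing
  have hanti : StrictAnti φ := by
    apply strictAnti_of_deriv_neg
    intro t
    rw [(hφd t).deriv]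
    have h10 : 0 < g t ⬝ᵥ g t := by
      rcases lt_or_eq_of_le (Finset.sum_nonneg fun i _ => mul_self_nonneg (g t i)) with h | h
      · exact h
      · exact absurd (dotProduct_self_eq_zero.mp h.symm) (hgne t)
    nlinarith
  have hφ1 : 0 ≤ φ 1 := by
    apply le_of_tendsto htend
    filter_upwards [eventually_ge_atTop (1:ℝ)] with t ht
    exact (hanti.antitone ht)
  have hφ0 : φ 1 < φ 0 := hanti (by norm_num)
  have hg0 : g 0 = v := by
    simp [hg, Matrix.one_mulVec]
  have hgoal : 0 < v ⬝ᵥ (P *ᵥ v) := by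
    have h11 : 0 < g 0 ⬝ᵥ (P *ᵥ g 0) := lt_of_le_of_lt hφ1 hφ0
    rwa [hg0] at h11
  simpa [star_trivial] using hgoal

/-- If all complex eigenvalues of the real matrix `J` have negative real part, then there is
a unique symmetric positive definite matrix `Q` such that `Q(J + Q)` is antisymmetric,
i.e. `Q(J + Q) + (J + Q)ᵀ Q = 0`. -/
theorem quasipotential_matrix_exists_unique (d : ℕ) (J : Matrix (Fin d) (Fin d) ℝ)
    (hJ : ∀ μ ∈ spectrum ℂ (J.map (Complex.ofReal)), μ.re < 0) :
    ∃! Q : Matrix (Fin d) (Fin d) ℝ,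
      Q.IsSymm ∧ Q.PosDef ∧ Q * (J + Q) + (J + Q)ᵀ * Q = 0 := by
  rcases Nat.eq_zero_or_pos d with hd | hd
  · subst hd
    refine ⟨0, ⟨?_, ?_, ?_⟩, fun Q' _ => Subsingleton.elim _ _⟩
    · simp [Matrix.IsSymm]
    · refine ⟨by simp [Matrix.IsHermitian], fun x hx => absurd (Subsingleton.elim x 0) hx⟩
    · exact Subsingleton.elim _ _
  obtain ⟨P, hP, hPs⟩ := exists_lyapunov_sol hd J hJ
  have hPD : P.PosDef := lyapunov_posdef hd J hJ P hP hPs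
  have hPdet : IsUnit P.det := isUnit_iff_ne_zero.mpr hPD.det_pos.ne'
  set Q : Matrix (Fin d) (Fin d) ℝ := P⁻¹ with hQdef
  have hQP : Q * P = 1 := Matrix.nonsing_inv_mul P hPdet
  have hPQ : P * Q = 1 := Matrix.mul_nonsing_inv P hPdet
  have hQs : Qᵀ = Q := by
    rw [hQdef, Matrix.transpose_nonsing_inv, hPs]
  have hlyap0 : J * P + P * Jᵀ + (2 : ℝ) • (1 : Matrix (Fin d) (Fin d) ℝ) = 0 := by
    rw [hP, neg_smul, neg_add_cancel]
  have main_eq : ∀ Q₀ P₀ : Matrix (Fin d) (Fin d) ℝ, Q₀ᵀ = Q₀ → Q₀ * P₀ = 1 → P₀ * Q₀ = 1 →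
      Q₀ * (J + Q₀) + (J + Q₀)ᵀ * Q₀ =
        Q₀ * (J * P₀ + P₀ * Jᵀ + (2 : ℝ) • (1 : Matrix (Fin d) (Fin d) ℝ)) * Q₀ := by
    intro Q₀ P₀ hs hQP₀ hPQ₀
    have e1 : Q₀ * (J * P₀) * Q₀ = Q₀ * J := by
      rw [mul_assoc, mul_assoc, hPQ₀, mul_one]
    have e2 : Q₀ * (P₀ * Jᵀ) * Q₀ = Jᵀ * Q₀ := by
      rw [← mul_assoc, hQP₀, one_mul]
    have e3 : Q₀ * ((2 : ℝ) • (1 : Matrix (Fin d) (Fin d) ℝ)) * Q₀ = Q₀ * Q₀ + Q₀ * Q₀ := by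
      rw [two_smul, mul_add, mul_one, add_mul]
    calc Q₀ * (J + Q₀) + (J + Q₀)ᵀ * Q₀
        = Q₀ * J + Q₀ * Q₀ + (Jᵀ * Q₀ + Q₀ * Q₀) := by
          rw [mul_add, Matrix.transpose_add, hs, add_mul]
      _ = Q₀ * (J * P₀) * Q₀ + Q₀ * (P₀ * Jᵀ) * Q₀
          + Q₀ * ((2 : ℝ) • (1 : Matrix (Fin d) (Fin d) ℝ)) * Q₀ := by
          rw [e1, e2, e3]; abel
      _ = Q₀ * (J * P₀ + P₀ * Jᵀ + (2 : ℝ) • (1 : Matrix (Fin d) (Fin d) ℝ)) * Q₀ := by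
          rw [mul_add, mul_add, add_mul, add_mul]
  refine ⟨Q, ⟨hQs, hPD.inv, ?_⟩, ?_⟩
  · rw [main_eq Q P hQs hQP hPQ, hlyap0, mul_zero, zero_mul]
  · rintro Q' ⟨hQ's, hQ'pd, hQ'eq⟩
    have hQ'det : IsUnit Q'.det := isUnit_iff_ne_zero.mpr hQ'pd.det_pos.ne'
    set P' : Matrix (Fin d) (Fin d) ℝ := Q'⁻¹ with hP'def
    have hQ'P' : Q' * P' = 1 := Matrix.mul_nonsing_inv Q' hQ'det
    have hP'Q' : P' * Q' = 1 := Matrix.nonsing_inv_mul Q' hQ'det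
    have hX : J * P' + P' * Jᵀ + (2 : ℝ) • (1 : Matrix (Fin d) (Fin d) ℝ) = 0 := by
      set X := J * P' + P' * Jᵀ + (2 : ℝ) • (1 : Matrix (Fin d) (Fin d) ℝ) with hXdef
      have h1 : P' * (Q' * X * Q') * P' = (P' * Q') * X * (Q' * P') := by
        noncomm_ring
      calc X = (P' * Q') * X * (Q' * P') := by rw [hP'Q', hQ'P', one_mul, mul_one]
        _ = P' * (Q' * X * Q') * P' := h1.symm
        _ = P' * (Q' * (J + Q') + (J + Q')ᵀ * Q') * P' := by
            rw [← main_eq Q' P' hQ's hQ'P' hP'Q']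
        _ = 0 := by rw [hQ'eq, mul_zero, zero_mul]
    have hP'lyap : J * P' + P' * Jᵀ = -(2 : ℝ) • (1 : Matrix (Fin d) (Fin d) ℝ) := by
      rw [neg_smul]
      linear_combination (norm := (rw [← sub_eq_zero] at *; abel_nf; try exact hX)) hX
    have hdiff : J * (P' - P) + (P' - P) * Jᵀ = 0 := by
      rw [mul_sub, sub_mul]
      rw [show J * P' - J * P + (P' * Jᵀ - P * Jᵀ)
          = (J * P' + P' * Jᵀ) - (J * P + P * Jᵀ) by abel, hP'lyap, hP, sub_self]
    have hPP' : P' = P := by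
      have := sylvester_inj hd J hJ (P' - P) hdiff
      rwa [sub_eq_zero] at this
    calc Q' = Q'⁻¹⁻¹ := (Matrix.nonsing_inv_nonsing_inv Q' hQ'det).symm
      _ = P'⁻¹ := rfl
      _ = P⁻¹ := by rw [hPP']
      _ = Q := rfl
end

section
/- Let σ > 0, β > 0, ρ > 0 and let b be the Lorenz vector field with these parameters. Then every solution of the Lorenz system remains in a bounded region: if x : [0, ∞) → ℝ³ is differentiable with x'(t) = b(x(t)) for all t ≥ 0, then sup_{t ≥ 0} ‖x(t)‖ < ∞. -/
private lemma lorenz_key_ineq (σ β ρ c U V W : ℝ) (hσ : 0 < σ) (hρ : 0 < ρ)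
    (hc : 0 < c) (hc2 : c ≤ 2) (hc2σ : c ≤ 2 * σ) (hcβ : c ≤ β) :
    -(2 * σ * ρ) * U ^ 2 - 2 * σ * V ^ 2 - 2 * σ * β * (W - ρ) ^ 2 + 2 * σ * β * ρ ^ 2
      + c * (ρ * U ^ 2 + σ * V ^ 2 + σ * (W - 2 * ρ) ^ 2)
      - (2 * σ * β * ρ ^ 2 + 2 * c * σ * ρ ^ 2) ≤ 0 := by
  nlinarith [mul_nonneg (mul_nonneg hρ.le (sub_nonneg.2 hc2σ)) (sq_nonneg U),
    mul_nonneg (mul_nonneg hσ.le (sub_nonneg.2 hc2)) (sq_nonneg V),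
    mul_nonneg (mul_nonneg hσ.le (sub_nonneg.2 hcβ)) (sq_nonneg (W - ρ)),
    mul_nonneg (mul_nonneg hc.le hσ.le) (sq_nonneg W)]

private lemma lorenz_norm_ineq (σ ρ C U V W : ℝ) (hσ : 0 < σ) (hρ : 0 < ρ)
    (h : ρ * U ^ 2 + σ * V ^ 2 + σ * (W - 2 * ρ) ^ 2 ≤ C) :
    U ^ 2 + V ^ 2 + W ^ 2 ≤ C / ρ + 3 * (C / σ) + 8 * ρ ^ 2 := by
  have hu2 : U ^ 2 ≤ C / ρ := by
    rw [le_div_iff₀ hρ]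
    nlinarith [sq_nonneg V, sq_nonneg (W - 2 * ρ)]
  have hv2 : V ^ 2 ≤ C / σ := by
    rw [le_div_iff₀ hσ]
    nlinarith [sq_nonneg U, sq_nonneg (W - 2 * ρ)]
  have hw2' : (W - 2 * ρ) ^ 2 ≤ C / σ := by
    rw [le_div_iff₀ hσ]
    nlinarith [sq_nonneg U, sq_nonneg V]
  have hw2 : W ^ 2 ≤ 2 * (C / σ) + 8 * ρ ^ 2 := by
    nlinarith [sq_nonneg (W - 4 * ρ)]
  linarith

/-- For `σ, β, ρ > 0`, every solution of the Lorenz system remains in a bounded region. -/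
theorem lorenz_solutions_bounded (σ β ρ : ℝ) (hσ : 0 < σ) (hβ : 0 < β) (hρ : 0 < ρ)
    (b : EuclideanSpace ℝ (Fin 3) → EuclideanSpace ℝ (Fin 3))
    (hb : ∀ x : EuclideanSpace ℝ (Fin 3),
      b x 0 = σ * (x 1 - x 0) ∧
      b x 1 = x 0 * (ρ - x 2) - x 1 ∧
      b x 2 = x 0 * x 1 - β * x 2)
    (x : ℝ → EuclideanSpace ℝ (Fin 3))
    (hode : ∀ t : ℝ, 0 ≤ t → HasDerivAt x (b (x t)) t) :
    ∃ M : ℝ, ∀ t : ℝ, 0 ≤ t → ‖x t‖ ≤ M := by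
  set u : ℝ → ℝ := fun t => x t 0 with hu_def
  set v : ℝ → ℝ := fun t => x t 1 with hv_def
  set w : ℝ → ℝ := fun t => x t 2 with hw_def
  have hu : ∀ t : ℝ, 0 ≤ t → HasDerivAt u (σ * (v t - u t)) t := by
    intro t ht
    have := ((EuclideanSpace.proj (0 : Fin 3) : EuclideanSpace ℝ (Fin 3) →L[ℝ] ℝ)).hasFDerivAt.comp_hasDerivAt t (hode t ht)
    simpa [(hb (x t)).1, Function.comp_def, hu_def, hv_def] using this
  have hv : ∀ t : ℝ, 0 ≤ t → HasDerivAt v (u t * (ρ - w t) - v t) t := by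
    intro t ht
    have := ((EuclideanSpace.proj (1 : Fin 3) : EuclideanSpace ℝ (Fin 3) →L[ℝ] ℝ)).hasFDerivAt.comp_hasDerivAt t (hode t ht)
    simpa [(hb (x t)).2.1, Function.comp_def, hu_def, hv_def, hw_def] using this
  have hw : ∀ t : ℝ, 0 ≤ t → HasDerivAt w (u t * v t - β * w t) t := by
    intro t ht
    have := ((EuclideanSpace.proj (2 : Fin 3) : EuclideanSpace ℝ (Fin 3) →L[ℝ] ℝ)).hasFDerivAt.comp_hasDerivAt t (hode t ht)
    simpa [(hb (x t)).2.2, Function.comp_def, hu_def, hv_def, hw_def] using this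
  set V : ℝ → ℝ := fun t => ρ * (u t) ^ 2 + σ * (v t) ^ 2 + σ * (w t - 2 * ρ) ^ 2 with hV_def
  set c : ℝ := min (min 2 (2 * σ)) β with hc_def
  have hc : 0 < c := lt_min (lt_min two_pos (by linarith)) hβ
  have hc2 : c ≤ 2 := le_trans (min_le_left _ _) (min_le_left _ _)
  have hc2σ : c ≤ 2 * σ := le_trans (min_le_left _ _) (min_le_right _ _)
  have hcβ : c ≤ β := min_le_right _ _
  set K : ℝ := 2 * σ * β * ρ ^ 2 + 2 * c * σ * ρ ^ 2 with hK_def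
  have hK : 0 ≤ K := by positivity
  -- derivative of V
  have hV' : ∀ t : ℝ, 0 ≤ t → HasDerivAt V
      (-(2 * σ * ρ) * (u t) ^ 2 - 2 * σ * (v t) ^ 2 - 2 * σ * β * (w t - ρ) ^ 2 + 2 * σ * β * ρ ^ 2) t := by
    intro t ht
    have h1 : HasDerivAt (fun s => ρ * (u s) ^ 2) (ρ * (2 * u t * (σ * (v t - u t)))) t := by
      simpa using (((hu t ht).pow 2).const_mul ρ)
    have h2 : HasDerivAt (fun s => σ * (v s) ^ 2) (σ * (2 * v t * (u t * (ρ - w t) - v t))) t := by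
      simpa using (((hv t ht).pow 2).const_mul σ)
    have h3 : HasDerivAt (fun s => σ * (w s - 2 * ρ) ^ 2)
        (σ * (2 * (w t - 2 * ρ) * (u t * v t - β * w t))) t := by
      have := (((hw t ht).sub_const (2 * ρ)).pow 2).const_mul σ
      simpa using this
    have := (h1.add h2).add h3
    exact this.congr_deriv (by ring)
  set h : ℝ → ℝ := fun t => V t * Real.exp (c * t) - (K / c) * (Real.exp (c * t) - 1) with hh_def
  have hexp : ∀ t : ℝ, HasDerivAt (fun s => Real.exp (c * s)) (c * Real.exp (c * t)) t := by
    intro t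
    simpa [mul_comm] using (((hasDerivAt_id t).const_mul c).exp)
  have hh : ∀ t : ℝ, 0 ≤ t → HasDerivAt h
      ((-(2 * σ * ρ) * (u t) ^ 2 - 2 * σ * (v t) ^ 2 - 2 * σ * β * (w t - ρ) ^ 2 + 2 * σ * β * ρ ^ 2
        + c * V t - K) * Real.exp (c * t)) t := by
    intro t ht
    have h1 := (hV' t ht).mul (hexp t)
    have h2 := ((hexp t).sub_const 1).const_mul (K / c)
    have := h1.sub h2
    exact this.congr_deriv (by field_simp)
  -- the derivative of h is nonpositive on [0, ∞)
  have hderiv_nonpos : ∀ t : ℝ, 0 ≤ t →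
      (-(2 * σ * ρ) * (u t) ^ 2 - 2 * σ * (v t) ^ 2 - 2 * σ * β * (w t - ρ) ^ 2 + 2 * σ * β * ρ ^ 2
        + c * V t - K) * Real.exp (c * t) ≤ 0 := by
    intro t ht
    have hexp_pos : 0 < Real.exp (c * t) := Real.exp_pos _
    have key := lorenz_key_ineq σ β ρ c (u t) (v t) (w t) hσ hρ hc hc2 hc2σ hcβ
    exact mul_nonpos_of_nonpos_of_nonneg key hexp_pos.le
  -- h is antitone on [0, ∞)
  have hanti : AntitoneOn h (Set.Ici 0) := by
    apply antitoneOn_of_deriv_nonpos (convex_Ici 0)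
    · exact fun t ht => ((hh t ht).continuousAt).continuousWithinAt
    · intro t ht
      rw [interior_Ici] at ht
      exact (hh t (le_of_lt ht)).differentiableAt.differentiableWithinAt
    · intro t ht
      rw [interior_Ici] at ht
      rw [(hh t (le_of_lt ht)).deriv]
      exact hderiv_nonpos t (le_of_lt ht)
  have hh0 : h 0 = V 0 := by simp [hh_def]
  have hV0 : 0 ≤ V 0 := by
    have : V 0 = ρ * (u 0) ^ 2 + σ * (v 0) ^ 2 + σ * (w 0 - 2 * ρ) ^ 2 := rfl
    rw [this]; positivity
  have hKc : 0 ≤ K / c := div_nonneg hK hc.le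
  have hVbound : ∀ t : ℝ, 0 ≤ t → V t ≤ V 0 + K / c := by
    intro t ht
    have hht := hanti (Set.self_mem_Ici) ht ht
    rw [hh0] at hht
    have hexp1 : (1 : ℝ) ≤ Real.exp (c * t) := by
      rw [← Real.exp_zero]
      exact Real.exp_le_exp.2 (by positivity)
    have hexp_pos : 0 < Real.exp (c * t) := Real.exp_pos _
    have h1 : V t * Real.exp (c * t) ≤ V 0 + K / c * (Real.exp (c * t) - 1) := by
      simp only [hh_def] at hht
      linarith
    have h2 : V t * Real.exp (c * t) ≤ (V 0 + K / c) * Real.exp (c * t) := by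
      clear_value V c K
      linarith [mul_nonneg hV0 (sub_nonneg.2 hexp1), hKc]
    exact le_of_mul_le_mul_right h2 hexp_pos
  set C : ℝ := V 0 + K / c with hC_def
  refine ⟨Real.sqrt (C / ρ + 3 * (C / σ) + 8 * ρ ^ 2), fun t ht => ?_⟩
  have hVt : ρ * (u t) ^ 2 + σ * (v t) ^ 2 + σ * (w t - 2 * ρ) ^ 2 ≤ C := hVbound t ht
  have hsum := lorenz_norm_ineq σ ρ C (u t) (v t) (w t) hσ hρ hVt
  have hnorm : ‖x t‖ = Real.sqrt ((u t) ^ 2 + (v t) ^ 2 + (w t) ^ 2) := by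
    rw [EuclideanSpace.norm_eq]
    congr 1
    rw [Fin.sum_univ_three]
    simp [hu_def, hv_def, hw_def, Real.norm_eq_abs, sq_abs]
  rw [hnorm]
  exact Real.sqrt_le_sqrt hsum
end

section
/- Let σ > 0, β > 0 and 0 < ρ < 1, and let b be the Lorenz vector field with these parameters. Then the origin is globally attracting: if x : [0, ∞) → ℝ³ is differentiable with x'(t) = b(x(t)) for all t ≥ 0, then x(t) → (0, 0, 0) as t → ∞. -/
set_option maxHeartbeats 1000000


/-- For `σ, β > 0` and `0 < ρ < 1`, the origin is a globally attracting equilibrium of the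
Lorenz system: every solution converges to the origin as `t → ∞`. -/
theorem lorenz_origin_globally_attracting (σ β ρ : ℝ)
    (hσ : 0 < σ) (hβ : 0 < β) (hρ0 : 0 < ρ) (hρ1 : ρ < 1)
    (b : EuclideanSpace ℝ (Fin 3) → EuclideanSpace ℝ (Fin 3))
    (hb : ∀ x : EuclideanSpace ℝ (Fin 3),
      b x 0 = σ * (x 1 - x 0) ∧
      b x 1 = x 0 * (ρ - x 2) - x 1 ∧
      b x 2 = x 0 * x 1 - β * x 2)
    (x : ℝ → EuclideanSpace ℝ (Fin 3))
    (hode : ∀ t : ℝ, 0 ≤ t → HasDerivAt x (b (x t)) t) :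
    Filter.Tendsto x Filter.atTop (nhds 0) := by
  -- coordinate derivatives
  have hcoord : ∀ (i : Fin 3) (t : ℝ), 0 ≤ t →
      HasDerivAt (fun s => x s i) (b (x t) i) t := by
    intro i t ht
    have := (EuclideanSpace.proj i (𝕜 := ℝ)).hasFDerivAt.comp_hasDerivAt t (hode t ht)
    simpa [Function.comp_def] using this
  set c : ℝ := min (1 - ρ) (min ((1 - ρ) * σ) (2 * β)) with hc_def
  have hc : 0 < c := by
    refine lt_min (by linarith) (lt_min (by nlinarith) (by linarith))
  have hc1 : c ≤ 1 - ρ := min_le_left _ _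
  have hc2 : c ≤ (1 - ρ) * σ := le_trans (min_le_right _ _) (min_le_left _ _)
  have hc3 : c ≤ 2 * β := le_trans (min_le_right _ _) (min_le_right _ _)
  set f : ℝ → ℝ := fun t => (x t 0) ^ 2 / σ + (x t 1) ^ 2 + (x t 2) ^ 2 with hf_def
  set D : ℝ → ℝ := fun t =>
    (2 * x t 0 * b (x t) 0) / σ + 2 * x t 1 * b (x t) 1 + 2 * x t 2 * b (x t) 2 with hD_def
  have hf' : ∀ t : ℝ, 0 ≤ t → HasDerivAt f (D t) t := by
    intro t ht
    have h0 := hcoord 0 t ht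
    have h1 := hcoord 1 t ht
    have h2 := hcoord 2 t ht
    have e0 : HasDerivAt (fun s => (x s 0) ^ 2 / σ) (2 * x t 0 * b (x t) 0 / σ) t := by
      have := (h0.pow 2).div_const σ
      simpa [mul_comm, mul_assoc, mul_left_comm] using this
    have e1 : HasDerivAt (fun s => (x s 1) ^ 2) (2 * x t 1 * b (x t) 1) t := by
      have := h1.fun_pow 2
      simpa [mul_comm, mul_assoc, mul_left_comm] using this
    have e2 : HasDerivAt (fun s => (x s 2) ^ 2) (2 * x t 2 * b (x t) 2) t := by
      have := h2.fun_pow 2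
      simpa [mul_comm, mul_assoc, mul_left_comm] using this
    exact (e0.add e1).add e2
  have hfnonneg : ∀ t : ℝ, 0 ≤ f t := by
    intro t
    have : 0 ≤ (x t 0) ^ 2 / σ := div_nonneg (sq_nonneg _) hσ.le
    positivity
  -- key differential inequality
  clear_value c
  have hkey : ∀ t : ℝ, 0 ≤ t → D t + c * f t ≤ 0 := by
    intro t _
    obtain ⟨e0, e1, e2⟩ := hb (x t)
    clear_value f D
    set a0 := x t 0 with ha0
    set a1 := x t 1 with ha1
    set a2 := x t 2 with ha2
    have hD : D t = 2 * a0 * (σ * (a1 - a0)) / σ + 2 * a1 * (a0 * (ρ - a2) - a1)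
        + 2 * a2 * (a0 * a1 - β * a2) := by rw [hD_def]; simp [e0, e1, e2]; rfl
    have hDs : D t = 2 * a0 * (a1 - a0) + 2 * a1 * (a0 * (ρ - a2) - a1)
        + 2 * a2 * (a0 * a1 - β * a2) := by
      rw [hD]; field_simp
    have hfv : f t = a0 ^ 2 / σ + a1 ^ 2 + a2 ^ 2 := by rw [hf_def]
    have hgoal : D t + c * f t = D t + c * (a0 ^ 2 / σ + a1 ^ 2 + a2 ^ 2) := by rw [hfv]
    rw [hgoal]
    clear_value a0 a1 a2
    have h1 : c * (a0 ^ 2 / σ) ≤ (1 - ρ) * a0 ^ 2 := by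
      rw [mul_div_assoc', div_le_iff₀ hσ]
      nlinarith [sq_nonneg a0]
    have h2 : c * a1 ^ 2 ≤ (1 - ρ) * a1 ^ 2 := by nlinarith [sq_nonneg a1]
    have h3 : c * a2 ^ 2 ≤ 2 * β * a2 ^ 2 := by nlinarith [sq_nonneg a2]
    have hmain : D t + ((1 - ρ) * a0 ^ 2 + (1 - ρ) * a1 ^ 2 + 2 * β * a2 ^ 2) ≤ 0 := by
      rw [hDs]; nlinarith [sq_nonneg (a0 - a1), hρ0.le]
    have hcf : c * (a0 ^ 2 / σ + a1 ^ 2 + a2 ^ 2) ≤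
        (1 - ρ) * a0 ^ 2 + (1 - ρ) * a1 ^ 2 + 2 * β * a2 ^ 2 := by
      rw [mul_add, mul_add]; linarith
    linarith
  -- g = f * exp(c t) is antitone on [0, ∞)
  set g : ℝ → ℝ := fun t => f t * Real.exp (c * t) with hg_def
  have hg' : ∀ t : ℝ, 0 ≤ t →
      HasDerivAt g ((D t + c * f t) * Real.exp (c * t)) t := by
    intro t ht
    have he : HasDerivAt (fun s => Real.exp (c * s)) (c * Real.exp (c * t)) t := by
      have := (Real.hasDerivAt_exp (c * t)).comp t ((hasDerivAt_id t).const_mul c)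
      simpa [mul_comm, Function.comp_def] using this
    have := (hf' t ht).fun_mul he
    exact this.congr_deriv (by ring)
  have hganti : AntitoneOn g (Set.Ici (0 : ℝ)) := by
    apply antitoneOn_of_deriv_nonpos (convex_Ici 0)
    · intro t ht
      exact ((hg' t ht).continuousAt).continuousWithinAt
    · intro t ht
      rw [interior_Ici] at ht
      exact (hg' t (le_of_lt ht)).differentiableAt.differentiableWithinAt
    · intro t ht
      rw [interior_Ici] at ht
      rw [(hg' t (le_of_lt ht)).deriv]
      exact mul_nonpos_of_nonpos_of_nonneg (hkey t (le_of_lt ht)) (Real.exp_pos _).le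
  have hbound : ∀ t : ℝ, 0 ≤ t → f t ≤ f 0 * Real.exp (-(c * t)) := by
    intro t ht
    have h := hganti Set.self_mem_Ici ht ht
    have h' : f t * Real.exp (c * t) ≤ f 0 := by
      have hg0 : g 0 = f 0 := by simp [hg_def]
      rw [hg0] at h; exact h
    have hpos := Real.exp_pos (c * t)
    calc f t = f t * Real.exp (c * t) * (Real.exp (c * t))⁻¹ := by field_simp
      _ ≤ f 0 * (Real.exp (c * t))⁻¹ :=
          mul_le_mul_of_nonneg_right h' (inv_nonneg.2 hpos.le)
      _ = f 0 * Real.exp (-(c * t)) := by rw [Real.exp_neg]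
  -- f tends to 0
  have hexp : Filter.Tendsto (fun t => f 0 * Real.exp (-(c * t))) Filter.atTop (nhds 0) := by
    have h1 : Filter.Tendsto (fun t : ℝ => -(c * t)) Filter.atTop Filter.atBot := by
      have h2 := Filter.Tendsto.const_mul_atBot hc Filter.tendsto_neg_atTop_atBot
      simpa [mul_neg] using h2
    have := Real.tendsto_exp_atBot.comp h1
    simpa using this.const_mul (f 0)
  have hftend : Filter.Tendsto f Filter.atTop (nhds 0) := by
    apply squeeze_zero' (Filter.eventually_atTop.2 ⟨0, fun t ht => hfnonneg t⟩)
      (Filter.eventually_atTop.2 ⟨0, fun t ht => hbound t ht⟩) hexp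
  -- norm squared tends to 0
  have hsum : ∀ t : ℝ, (x t 0) ^ 2 + (x t 1) ^ 2 + (x t 2) ^ 2 ≤ (σ + 2) * f t := by
    intro t
    clear_value f D
    have hft : f t = (x t 0) ^ 2 / σ + (x t 1) ^ 2 + (x t 2) ^ 2 := by rw [hf_def]
    have h0 : (x t 0) ^ 2 = σ * ((x t 0) ^ 2 / σ) := by field_simp
    have hq : 0 ≤ (x t 0) ^ 2 / σ := div_nonneg (sq_nonneg _) hσ.le
    rw [hft]
    nlinarith [mul_nonneg hσ.le hq, mul_nonneg hσ.le (sq_nonneg (x t 1)),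
      mul_nonneg hσ.le (sq_nonneg (x t 2)), hq]
  have hsumtend : Filter.Tendsto (fun t => (x t 0) ^ 2 + (x t 1) ^ 2 + (x t 2) ^ 2)
      Filter.atTop (nhds 0) := by
    apply squeeze_zero' (Filter.Eventually.of_forall (fun t => by positivity))
      (Filter.Eventually.of_forall hsum)
    simpa using hftend.const_mul (σ + 2)
  have hnorm : ∀ t : ℝ, ‖x t‖ = Real.sqrt ((x t 0) ^ 2 + (x t 1) ^ 2 + (x t 2) ^ 2) := by
    intro t
    rw [EuclideanSpace.norm_eq]
    congr 1
    simp [Fin.sum_univ_three, Real.norm_eq_abs, sq_abs]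
  have hnt : Filter.Tendsto (fun t => ‖x t‖) Filter.atTop (nhds 0) := by
    have := (Real.continuous_sqrt.tendsto 0).comp hsumtend
    simp only [Function.comp_def, Real.sqrt_zero] at this
    simpa [hnorm] using this
  rw [show (0 : EuclideanSpace ℝ (Fin 3)) = 0 from rfl]
  exact tendsto_zero_iff_norm_tendsto_zero.2 hnt
end

section
/- Let σ = 10, β = 8/3 and ρ > 1, and let A be the Jacobian matrix of the Lorenz vector field with parameters σ, β, ρ evaluated at the equilibrium C₊ = (√(β(ρ−1)), √(β(ρ−1)), ρ−1). Then every complex eigenvalue of A has negative real part if and only if ρ < 470/19 (≈ 24.74). In other words, the equilibria C₊ and C₋ are linearly asymptotically stable exactly for 1 < ρ < ρ₂ = 470/19, and lose stability at the subcritical Hopf bifurcation value ρ₂. -/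
lemma quad_neg_re (s t : ℝ) (hs : 0 < s) (ht : 0 < t) (μ : ℂ)
    (h : μ^2 + s*μ + t = 0) : μ.re < 0 := by
  have hre := congrArg Complex.re h
  have him := congrArg Complex.im h
  simp [Complex.add_re, Complex.add_im, Complex.mul_re, Complex.mul_im, pow_two] at hre him
  rcases mul_eq_zero.mp (show μ.im * (2*μ.re + s) = 0 by linarith) with h0 | h0
  · nlinarith [sq_nonneg μ.re, h0, hre]
  · linarith

lemma quad_bad (s t : ℝ) (hs : s ≤ 0) (ht : 0 < t) :
    ∃ μ : ℂ, μ^2 + s*μ + t = 0 ∧ 0 ≤ μ.re := by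
  rcases le_or_gt (s^2/4) t with hcase | hcase
  · set y := Real.sqrt (t - s^2/4) with hy'
    have hy : y*y = t - s^2/4 := Real.mul_self_sqrt (by linarith)
    refine ⟨Complex.mk (-s/2) y, ?_, by simpa using by linarith⟩
    apply Complex.ext <;>
      simp [Complex.add_re, Complex.add_im, Complex.mul_re, Complex.mul_im, pow_two] <;>
      nlinarith [hy]
  · set y := Real.sqrt (s^2 - 4*t) with hy'
    have hy : y*y = s^2 - 4*t := Real.mul_self_sqrt (by linarith)
    refine ⟨((-s + y)/2 : ℝ), ?_, ?_⟩
    · have : ((-s + y)/2 : ℝ)^2 + s*((-s + y)/2) + t = 0 := by nlinarith [hy]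
      exact_mod_cast congrArg (Complex.ofReal) this
    · simp only [Complex.ofReal_re]
      have := Real.sqrt_nonneg (s^2 - 4*t)
      rw [← hy'] at this
      linarith

lemma cubic_hurwitz (a b c : ℝ) (ha : 0 < a) (hb : 0 < b) (hc : 0 < c) :
    (∀ μ : ℂ, μ^3 + a*μ^2 + b*μ + c = 0 → μ.re < 0) ↔ c < a*b := by
  set K : ℝ := 1 + a + b + c with hK
  have hK1 : 1 ≤ K := by linarith
  have hfK : (-K)^3 + a*(-K)^2 + b*(-K) + c < 0 := by nlinarith [sq_nonneg K, hK1]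
  have hcont : ContinuousOn (fun x : ℝ => x^3 + a*x^2 + b*x + c) (Set.Icc (-K) 0) := by
    fun_prop
  have hmem : (0:ℝ) ∈ Set.Icc ((-K)^3 + a*(-K)^2 + b*(-K) + c) (0^3 + a*0^2 + b*0 + c) := by
    refine ⟨by linarith, by norm_num; linarith⟩
  obtain ⟨r, hr_mem, hr_root⟩ := intermediate_value_Icc (by linarith : (-K:ℝ) ≤ 0) hcont hmem
  simp only at hr_root
  have hr0 : r < 0 := by
    rcases lt_or_eq_of_le hr_mem.2 with h | h
    · exact h
    · exfalso; rw [h] at hr_root; simp at hr_root; linarith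
  set s : ℝ := a + r with hs'
  set t : ℝ := b + r*s with ht'
  have hct : c = -(r*t) := by rw [ht', hs']; linear_combination hr_root
  have ht : 0 < t := by nlinarith
  have key : a*b - c = s*(t - a*r) := by rw [hct, ht', hs']; ring
  have htar : 0 < t - a*r := by nlinarith
  constructor
  · intro hall
    by_contra hle
    push_neg at hle
    have hsle : s ≤ 0 := by nlinarith
    obtain ⟨μ, hμ, hμre⟩ := quad_bad s t hsle ht
    have : μ^3 + a*μ^2 + b*μ + c = 0 := by
      have : μ^3 + a*μ^2 + b*μ + c = (μ - r)*(μ^2 + s*μ + t) := by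
        rw [show (a:ℂ) = s - r by push_cast [hs']; ring,
            show (b:ℂ) = t - r*s by push_cast [ht']; ring,
            show (c:ℂ) = -(r*t) by exact_mod_cast congrArg Complex.ofReal hct]
        ring
      rw [this, hμ, mul_zero]
    exact absurd (hall μ this) (not_lt.mpr hμre)
  · intro hlt μ hμ
    have hspos : 0 < s := by nlinarith
    have hfac : (μ - r)*(μ^2 + s*μ + t) = 0 := by
      rw [show (μ - r)*(μ^2 + s*μ + t) = μ^3 + (s-r:ℝ)*μ^2 + (t-r*s:ℝ)*μ + (-(r*t):ℝ) by
        push_cast; ring]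
      rw [show ((s:ℝ)-r : ℝ) = a by rw [hs']; ring,
          show ((t:ℝ)-r*s : ℝ) = b by rw [ht']; ring, ← hct]
      exact hμ
    rcases mul_eq_zero.mp hfac with h | h
    · have : μ = (r:ℂ) := by linear_combination h
      rw [this]; simpa using hr0
    · exact quad_neg_re s t hspos ht μ h

lemma lorenz_spectrum_iff (ρ : ℝ) (hρ : 1 < ρ) (μ : ℂ) (w : ℝ)
    (hw : w = Real.sqrt ((8/3) * (ρ - 1)))
    (M : Matrix (Fin 3) (Fin 3) ℝ)
    (hM : M = !![-(10:ℝ), 10, 0; 1, -1, -w; w, w, -(8/3)]) :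
    μ ∈ spectrum ℂ (M.map (Complex.ofReal)) ↔
      μ^3 + (41/3)*μ^2 + ((8/3)*(10+ρ))*μ + ((160/3)*(ρ-1)) = 0 := by
  have hw2 : (w:ℂ)*(w:ℂ) = (((8:ℝ)/3)*(ρ-1) : ℝ) := by
    rw [← Complex.ofReal_mul]
    norm_cast
    rw [hw]
    exact Real.mul_self_sqrt (by linarith)
  have h1 : μ ∈ spectrum ℂ (M.map (Complex.ofReal)) ↔
      ((algebraMap ℂ (Matrix (Fin 3) (Fin 3) ℂ)) μ - M.map (Complex.ofReal)).det = 0 := by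
    rw [spectrum.mem_iff, Matrix.isUnit_iff_isUnit_det, isUnit_iff_ne_zero, not_not]
  rw [h1, hM, Matrix.det_fin_three]
  simp only [Matrix.sub_apply, Matrix.map_apply, Matrix.algebraMap_matrix_apply,
    Matrix.cons_val', Matrix.cons_val_zero, Matrix.cons_val_one, Matrix.head_cons,
    Matrix.empty_val', Matrix.cons_val_fin_one, Matrix.head_fin_const,
    Matrix.cons_val_two, Matrix.tail_cons, Matrix.cons_val]
  simp [Matrix.vecHead, Matrix.vecTail, Fin.ext_iff]
  norm_num [Complex.ofReal_neg, Fin.ext_iff]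
  have hw2c : (w:ℂ)*(w:ℂ) = 8/3*((ρ:ℂ)-1) := by rw [hw2]; push_cast; ring
  constructor <;> intro h
  · linear_combination h - (μ+20)*hw2c
  · linear_combination h + (μ+20)*hw2c

/-- For `σ = 10`, `β = 8/3`, `ρ > 1`, all complex eigenvalues of the Jacobian of the Lorenz
field at `C₊` have negative real part if and only if `ρ < 470/19 ≈ 24.74`: the equilibria
`C₊`, `C₋` are linearly asymptotically stable exactly for `1 < ρ < ρ₂ = 470/19`. -/
theorem lorenz_Cplus_stability_threshold (σ β ρ : ℝ)
    (hσ : σ = 10) (hβ : β = 8/3) (hρ : 1 < ρ)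
    (A : Matrix (Fin 3) (Fin 3) ℝ)
    (hA : A = !![-σ, σ, 0;
                 1, -1, -Real.sqrt (β * (ρ - 1));
                 Real.sqrt (β * (ρ - 1)), Real.sqrt (β * (ρ - 1)), -β]) :
    (∀ μ ∈ spectrum ℂ (A.map (Complex.ofReal)), μ.re < 0) ↔ ρ < 470/19 := by
  subst hσ hβ
  have hspec := fun μ : ℂ => lorenz_spectrum_iff ρ hρ μ (Real.sqrt ((8/3) * (ρ - 1))) rfl A hA
  have h1 : (∀ μ ∈ spectrum ℂ (A.map (Complex.ofReal)), μ.re < 0) ↔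
      (∀ μ : ℂ, μ^3 + (41/3:ℝ)*μ^2 + ((8/3)*(10+ρ):ℝ)*μ + ((160/3)*(ρ-1):ℝ) = 0 → μ.re < 0) := by
    constructor
    · intro h μ hμ
      refine h μ ((hspec μ).mpr ?_)
      push_cast at hμ ⊢
      linear_combination hμ
    · intro h μ hμ
      refine h μ ?_
      have := (hspec μ).mp hμ
      push_cast
      push_cast at this
      linear_combination this
  rw [h1, cubic_hurwitz (41/3) ((8/3)*(10+ρ)) ((160/3)*(ρ-1)) (by norm_num)
      (by nlinarith) (by nlinarith)]
  constructor <;> intro h <;> nlinarith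
end
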